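/- arXiv:1309.6116 — 5 statements merged into one kernel-verified Lean document; each statement's English description precedes it below -/
import Mathlib

section
/- Let Γ be a real matrix with rows indexed by a set X and columns by a set Y, and for x ∈ X, y ∈ Y ⊆ [q]^n strings, let Δ_J denote the 0/1 matrix with Δ_J[x,y] = 1 iff x_j ≠ y_j for some j ∈ J. Then for any J ⊆ K ⊆ [n], ‖Γ ∘ Δ_J‖ ≤ 2‖Γ ∘ Δ_K‖, where ∘ is the entrywise (Hadamard) product and ‖·‖ is the operator norm. -/
/-- The ℓ₂→ℓ₂ operator norm of a real matrix. -/
noncomputable def opNorm {X Y : Type*} [Fintype X] [Fintype Y] [DecidableEq Y]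
    (A : Matrix X Y ℝ) : ℝ :=
  ‖LinearMap.toContinuousLinearMap (Matrix.toEuclideanLin A)‖

/-- The 0/1 matrix with entry 1 iff the strings differ on some coordinate in `J`. -/
noncomputable def deltaMat {q n : ℕ} (X Y : Finset (Fin n → Fin q)) (J : Finset (Fin n)) :
    Matrix X Y ℝ :=
  Matrix.of fun x y => if ∃ j ∈ J, (x : Fin n → Fin q) j ≠ (y : Fin n → Fin q) j then 1 else 0

section aux

variable {X Y : Type*} [Fintype X] [Fintype Y] [DecidableEq Y]

private lemma bilin_apply (A : Matrix X Y ℝ) (u : EuclideanSpace ℝ X) (v : EuclideanSpace ℝ Y) :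
    (inner ℝ u ((LinearMap.toContinuousLinearMap (Matrix.toEuclideanLin A)) v) : ℝ)
      = ∑ x, ∑ y, u x * (A x y * v y) := by
  simp only [LinearMap.coe_toContinuousLinearMap', PiLp.inner_apply, RCLike.inner_apply,
    starRingEnd_apply, star_trivial]
  refine Finset.sum_congr rfl fun x _ => ?_
  have : (Matrix.toEuclideanLin A v) x = ∑ y, A x y * v y := by
    simp [Matrix.toEuclideanLin_apply, Matrix.mulVec, dotProduct]
  rw [this, mul_comm, Finset.mul_sum]

private lemma bilin_le (A : Matrix X Y ℝ) (u : EuclideanSpace ℝ X) (v : EuclideanSpace ℝ Y) :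
    |∑ x, ∑ y, u x * (A x y * v y)| ≤ opNorm A * (‖u‖ * ‖v‖) := by
  rw [← bilin_apply]
  set T := LinearMap.toContinuousLinearMap (Matrix.toEuclideanLin A)
  calc |(inner ℝ u (T v) : ℝ)| ≤ ‖u‖ * ‖T v‖ := abs_real_inner_le_norm u (T v)
    _ ≤ ‖u‖ * (‖T‖ * ‖v‖) := mul_le_mul_of_nonneg_left (T.le_opNorm v) (norm_nonneg u)
    _ = opNorm A * (‖u‖ * ‖v‖) := by unfold opNorm; ring

private lemma opNorm_le_of_bilin (A : Matrix X Y ℝ) {C : ℝ} (hC : 0 ≤ C)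
    (h : ∀ (u : EuclideanSpace ℝ X) (v : EuclideanSpace ℝ Y),
      |∑ x, ∑ y, u x * (A x y * v y)| ≤ C * (‖u‖ * ‖v‖)) :
    opNorm A ≤ C := by
  refine ContinuousLinearMap.opNorm_le_bound _ hC fun v => ?_
  set T := LinearMap.toContinuousLinearMap (Matrix.toEuclideanLin A)
  have h2 : ‖T v‖ ^ 2 = ∑ x, ∑ y, (T v) x * (A x y * v y) := by
    rw [← real_inner_self_eq_norm_sq, bilin_apply]
  rcases eq_or_lt_of_le (norm_nonneg (T v)) with h0 | h0
  · rw [← h0]; positivity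
  · have := (h (T v) v).trans_eq' (abs_of_nonneg (by rw [← h2]; positivity)).symm
    rw [← h2] at this
    have h3 : ‖T v‖ * ‖T v‖ ≤ (C * ‖v‖) * ‖T v‖ := by
      rw [abs_abs, abs_of_nonneg (by positivity)] at this; nlinarith [sq_nonneg (‖T v‖)]
    exact le_of_mul_le_mul_right (by linarith [h3]) h0

private lemma norm_sq_eq (u : EuclideanSpace ℝ X) : ‖u‖ ^ 2 = ∑ x, u x ^ 2 := by
  rw [← real_inner_self_eq_norm_sq, PiLp.inner_apply]
  simp [sq]

/-- Hadamard product with a pattern matrix `[φ x = ψ y]` does not increase the op norm. -/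
private lemma opNorm_hadamard_pattern {Z : Type*} [Fintype Z] [DecidableEq Z]
    (A : Matrix X Y ℝ) (φ : X → Z) (ψ : Y → Z) :
    opNorm (Matrix.of fun x y => A x y * (if φ x = ψ y then 1 else 0)) ≤ opNorm A := by
  refine opNorm_le_of_bilin _ (norm_nonneg _) fun u v => ?_
  classical
  set uz : Z → EuclideanSpace ℝ X := fun z => WithLp.toLp 2 (fun x => if φ x = z then u x else 0) with huz
  set vz : Z → EuclideanSpace ℝ Y := fun z => WithLp.toLp 2 (fun y => if ψ y = z then v y else 0) with hvz
  set F : Z → X → Y → ℝ := fun z x y => (uz z) x * (A x y * (vz z) y) with hF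
  have hpt : ∀ x y, ∑ z, F z x y
      = u x * ((Matrix.of fun x y => A x y * (if φ x = ψ y then 1 else 0)) x y * v y) := by
    intro x y
    have h1 : ∀ z, F z x y
        = if φ x = z then (u x * (A x y * if ψ y = z then v y else 0)) else 0 := by
      intro z; simp only [hF, huz, hvz, PiLp.toLp_apply]; split <;> simp
    simp only [h1, Finset.sum_ite_eq, Finset.mem_univ, if_true, Matrix.of_apply]
    by_cases h : φ x = ψ y
    · simp [h, eq_comm]
    · have h' : ¬ ψ y = φ x := fun hh => h hh.symm
      simp [h, h']
  have hdecomp : ∑ x, ∑ y, u x * ((Matrix.of fun x y => A x y * (if φ x = ψ y then 1 else 0)) x y * v y)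
      = ∑ z, ∑ x, ∑ y, F z x y := by
    calc ∑ x, ∑ y, u x * ((Matrix.of fun x y => A x y * (if φ x = ψ y then 1 else 0)) x y * v y)
        = ∑ x, ∑ y, ∑ z, F z x y :=
          Finset.sum_congr rfl fun x _ => Finset.sum_congr rfl fun y _ => (hpt x y).symm
      _ = ∑ x, ∑ z, ∑ y, F z x y := Finset.sum_congr rfl fun x _ => Finset.sum_comm
      _ = ∑ z, ∑ x, ∑ y, F z x y := Finset.sum_comm
  rw [hdecomp]
  have husq : ∑ z, ‖uz z‖ ^ 2 = ‖u‖ ^ 2 := by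
    simp only [norm_sq_eq, huz, PiLp.toLp_apply]
    rw [Finset.sum_comm]
    refine Finset.sum_congr rfl fun x _ => ?_
    have : ∀ z, (if φ x = z then u x else 0) ^ 2 = if φ x = z then u x ^ 2 else 0 := by
      intro z; split <;> simp
    simp [this, Finset.sum_ite_eq]
  have hvsq : ∑ z, ‖vz z‖ ^ 2 = ‖v‖ ^ 2 := by
    simp only [norm_sq_eq, hvz, PiLp.toLp_apply]
    rw [Finset.sum_comm]
    refine Finset.sum_congr rfl fun y _ => ?_
    have : ∀ z, (if ψ y = z then v y else 0) ^ 2 = if ψ y = z then v y ^ 2 else 0 := by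
      intro z; split <;> simp
    simp [this, Finset.sum_ite_eq]
  calc |∑ z, ∑ x, ∑ y, F z x y|
      ≤ ∑ z, |∑ x, ∑ y, F z x y| := Finset.abs_sum_le_sum_abs _ _
    _ ≤ ∑ z, opNorm A * (‖uz z‖ * ‖vz z‖) := Finset.sum_le_sum fun z _ => bilin_le A _ _
    _ = opNorm A * ∑ z, ‖uz z‖ * ‖vz z‖ := by rw [Finset.mul_sum]
    _ ≤ opNorm A * (‖u‖ * ‖v‖) := by
        refine mul_le_mul_of_nonneg_left ?_ (norm_nonneg _)
        have hcs := Finset.sum_mul_sq_le_sq_mul_sq Finset.univ (fun z => ‖uz z‖) (fun z => ‖vz z‖)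
        rw [husq, hvsq] at hcs
        have h1 : (0:ℝ) ≤ ∑ z, ‖uz z‖ * ‖vz z‖ := Finset.sum_nonneg fun z _ => by positivity
        nlinarith [norm_nonneg u, norm_nonneg v, mul_nonneg (norm_nonneg u) (norm_nonneg v)]
  
private lemma opNorm_sub_le (A B : Matrix X Y ℝ) : opNorm (A - B) ≤ opNorm A + opNorm B := by
  unfold opNorm
  rw [map_sub, map_sub]
  exact norm_sub_le _ _

end aux

theorem stmt_0 {q n : ℕ} (X Y : Finset (Fin n → Fin q)) (Γ : Matrix X Y ℝ)
    (J K : Finset (Fin n)) (hJK : J ⊆ K) :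
    opNorm (Matrix.hadamard Γ (deltaMat X Y J)) ≤ 2 * opNorm (Matrix.hadamard Γ (deltaMat X Y K)) := by
  classical
  set A := Matrix.hadamard Γ (deltaMat X Y K) with hA
  set φ : X → (Fin n → Option (Fin q)) :=
    fun x => fun j => if j ∈ J then some ((x : Fin n → Fin q) j) else none with hφ
  set ψ : Y → (Fin n → Option (Fin q)) :=
    fun y => fun j => if j ∈ J then some ((y : Fin n → Fin q) j) else none with hψ
  have hiff : ∀ (x : X) (y : Y), φ x = ψ y ↔
      ¬ ∃ j ∈ J, (x : Fin n → Fin q) j ≠ (y : Fin n → Fin q) j := by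
    intro x y
    constructor
    · intro h ⟨j, hj, hne⟩
      have := congrFun h j
      simp [hφ, hψ, hj] at this
      exact hne this
    · intro h
      funext j
      by_cases hj : j ∈ J
      · simp only [hφ, hψ, hj, if_true, Option.some.injEq]
        by_contra hne
        exact h ⟨j, hj, hne⟩
      · simp [hφ, hψ, hj]
  have hEq : Matrix.hadamard Γ (deltaMat X Y J)
      = A - Matrix.of fun x y => A x y * (if φ x = ψ y then 1 else 0) := by
    ext x y
    simp only [Matrix.hadamard_apply, Matrix.sub_apply, Matrix.of_apply, hA, deltaMat,
      Matrix.of_apply]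
    by_cases hP : ∃ j ∈ J, (x : Fin n → Fin q) j ≠ (y : Fin n → Fin q) j
    · have hQ : ∃ j ∈ K, (x : Fin n → Fin q) j ≠ (y : Fin n → Fin q) j := by
        obtain ⟨j, hj, hne⟩ := hP
        exact ⟨j, hJK hj, hne⟩
      have hne : ¬ (φ x = ψ y) := fun hc => (hiff x y).mp hc hP
      simp [hP, hQ, hne]
    · have heq : φ x = ψ y := (hiff x y).mpr hP
      simp [hP, heq]
  rw [hEq]
  have h1 := opNorm_sub_le A (Matrix.of fun x y => A x y * (if φ x = ψ y then 1 else 0))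
  have h2 := opNorm_hadamard_pattern A φ ψ
  linarith
end

section
/- For every total Boolean function f : {0,1}^n → {0,1}, the block sensitivity and certificate complexity satisfy bs(f) ≤ C(f) ≤ bs(f)² (Nisan's inequality). -/
/-- `x` with the bits in `B` flipped. -/
def flipOn {n : ℕ} (x : Fin n → Bool) (B : Finset (Fin n)) : Fin n → Bool :=
  fun i => if i ∈ B then !(x i) else x i

/-- Block sensitivity of `f` at `x`: the largest `k` admitting `k` pairwise disjoint
nonempty sensitive blocks. -/
noncomputable def bsAt {n : ℕ} (f : (Fin n → Bool) → Bool) (x : Fin n → Bool) : ℕ :=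
  sSup {k | ∃ B : Fin k → Finset (Fin n), (∀ i, (B i).Nonempty) ∧
    (∀ i j, i ≠ j → Disjoint (B i) (B j)) ∧ ∀ i, f (flipOn x (B i)) ≠ f x}

/-- Block sensitivity of `f`. -/
noncomputable def blockSensitivity {n : ℕ} (f : (Fin n → Bool) → Bool) : ℕ :=
  ⨆ x, bsAt f x

/-- Certificate complexity of `f` at `x`: the least size of a set `S` such that every
input agreeing with `x` on `S` has the same `f`-value. -/
noncomputable def certAt {n : ℕ} (f : (Fin n → Bool) → Bool) (x : Fin n → Bool) : ℕ :=
  sInf {s | ∃ S : Finset (Fin n), S.card = s ∧ ∀ y, (∀ i ∈ S, y i = x i) → f y = f x}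

/-- Certificate complexity of `f`. -/
noncomputable def certComplexity {n : ℕ} (f : (Fin n → Bool) → Bool) : ℕ :=
  ⨆ x, certAt f x

namespace NisanAux

open Finset

variable {n : ℕ}

def bsSet (f : (Fin n → Bool) → Bool) (x : Fin n → Bool) : Set ℕ :=
  {k | ∃ B : Fin k → Finset (Fin n), (∀ i, (B i).Nonempty) ∧
    (∀ i j, i ≠ j → Disjoint (B i) (B j)) ∧ ∀ i, f (flipOn x (B i)) ≠ f x}

lemma bsAt_eq (f : (Fin n → Bool) → Bool) (x) : bsAt f x = sSup (bsSet f x) := rfl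

lemma zero_mem_bsSet (f : (Fin n → Bool) → Bool) (x) : 0 ∈ bsSet f x :=
  ⟨Fin.elim0, fun i => i.elim0, fun i => i.elim0, fun i => i.elim0⟩

lemma bsSet_bddAbove (f : (Fin n → Bool) → Bool) (x) : BddAbove (bsSet f x) := by
  refine ⟨n, fun k hk => ?_⟩
  obtain ⟨B, hne, hdisj, -⟩ := hk
  choose g hg using hne
  have hinj : Function.Injective g := by
    intro i j hij
    by_contra hne'
    exact Finset.disjoint_left.mp (hdisj i j hne') (hg i) (hij ▸ hg j)
  simpa using Fintype.card_le_of_injective g hinj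

lemma bsAt_mem (f : (Fin n → Bool) → Bool) (x) : bsAt f x ∈ bsSet f x :=
  Nat.sSup_mem ⟨0, zero_mem_bsSet f x⟩ (bsSet_bddAbove f x)

lemma le_bsAt (f : (Fin n → Bool) → Bool) (x) {k : ℕ} (hk : k ∈ bsSet f x) :
    k ≤ bsAt f x := le_csSup (bsSet_bddAbove f x) hk

lemma bsAt_le_blockSensitivity (f : (Fin n → Bool) → Bool) (x) :
    bsAt f x ≤ blockSensitivity f :=
  le_ciSup (Set.Finite.bddAbove (Set.finite_range _)) x

lemma flipOn_empty (x : Fin n → Bool) : flipOn x (∅ : Finset (Fin n)) = x := by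
  funext i; simp [flipOn]

lemma flipOn_agree (x : Fin n → Bool) (B : Finset (Fin n)) {i : Fin n} (hi : i ∉ B) :
    flipOn x B i = x i := by simp [flipOn, hi]

lemma flipOn_diff (x y : Fin n → Bool) :
    flipOn x (Finset.univ.filter (fun i => y i ≠ x i)) = y := by
  funext i
  by_cases h : y i = x i
  · simp [flipOn, h]
  · simp only [flipOn, mem_filter, mem_univ, true_and, if_pos h]
    cases hx : x i <;> cases hy : y i <;> simp_all

lemma flipOn_flipOn_single (x : Fin n → Bool) (B : Finset (Fin n)) {j : Fin n} (hj : j ∈ B) :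
    flipOn (flipOn x B) {j} = flipOn x (B.erase j) := by
  funext i
  simp only [flipOn, Finset.mem_singleton, Finset.mem_erase]
  by_cases h1 : i = j
  · subst h1; simp [hj]
  · simp [h1]

lemma exists_minimal_block (f : (Fin n → Bool) → Bool) (x : Fin n → Bool) :
    ∀ B : Finset (Fin n), f (flipOn x B) ≠ f x →
      ∃ B', B' ⊆ B ∧ f (flipOn x B') ≠ f x ∧ ∀ C ⊂ B', f (flipOn x C) = f x := by
  intro B
  induction B using Finset.strongInduction with
  | _ B ih =>
    intro hB
    by_cases h : ∃ C ⊂ B, f (flipOn x C) ≠ f x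
    · obtain ⟨C, hCB, hC⟩ := h
      obtain ⟨B', h1, h2, h3⟩ := ih C hCB hC
      exact ⟨B', h1.trans hCB.subset, h2, h3⟩
    · push_neg at h
      exact ⟨B, Finset.Subset.refl B, hB, h⟩

lemma minimal_block_card_le (f : (Fin n → Bool) → Bool) (x : Fin n → Bool)
    (B : Finset (Fin n)) (hB : f (flipOn x B) ≠ f x)
    (hmin : ∀ C ⊂ B, f (flipOn x C) = f x) :
    B.card ≤ blockSensitivity f := by
  set z := flipOn x B with hz
  have hmem : B.card ∈ bsSet f z := by
    set e := B.orderIsoOfFin rfl with he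
    refine ⟨fun i => {(e i : Fin n)}, fun i => Finset.singleton_nonempty _, ?_, ?_⟩
    · intro i j hij
      rw [Finset.disjoint_singleton]
      intro hEq
      exact hij (e.injective (Subtype.ext hEq))
    · intro i
      have hji : (e i : Fin n) ∈ B := (e i).2
      rw [flipOn_flipOn_single x B hji]
      have h1 : f (flipOn x (B.erase (e i : Fin n))) = f x :=
        hmin _ (Finset.erase_ssubset hji)
      rw [h1]
      exact fun h => hB h.symm
  calc B.card ≤ bsAt f z := le_bsAt f z hmem
    _ ≤ blockSensitivity f := bsAt_le_blockSensitivity f z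

lemma bsAt_le_certAt (f : (Fin n → Bool) → Bool) (x : Fin n → Bool) :
    bsAt f x ≤ certAt f x := by
  have hcertne : {s | ∃ S : Finset (Fin n), S.card = s ∧
      ∀ y, (∀ i ∈ S, y i = x i) → f y = f x}.Nonempty := by
    refine ⟨(Finset.univ : Finset (Fin n)).card, Finset.univ, rfl, fun y hy => ?_⟩
    have : y = x := funext fun i => hy i (Finset.mem_univ i)
    rw [this]
  obtain ⟨S, hScard, hScert⟩ := Nat.sInf_mem hcertne
  obtain ⟨B, hne, hdisj, hsens⟩ := bsAt_mem f x
  have hhit : ∀ i, ∃ a, a ∈ B i ∧ a ∈ S := by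
    intro i
    by_contra h
    push_neg at h
    refine hsens i (hScert _ fun a ha => ?_)
    exact flipOn_agree x (B i) (fun hb => h a hb ha)
  choose g hgB hgS using hhit
  have hinj : Function.Injective g := by
    intro i j hij
    by_contra hne'
    exact Finset.disjoint_left.mp (hdisj i j hne') (hgB i) (hij ▸ hgB j)
  have hle : bsAt f x ≤ S.card := by
    have := Finset.card_le_card_of_injOn (s := (Finset.univ : Finset (Fin (bsAt f x))))
      (t := S) g (fun i _ => hgS i) (hinj.injOn)
    simpa using this
  exact hle.trans (le_of_eq hScard)

lemma certAt_le_sq (f : (Fin n → Bool) → Bool) (x : Fin n → Bool) :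
    certAt f x ≤ (blockSensitivity f) ^ 2 := by
  obtain ⟨B, hne, hdisj, hsens⟩ := bsAt_mem f x
  choose B' hsub hsens' hmin using fun i => exists_minimal_block f x (B i) (hsens i)
  set S := Finset.univ.biUnion B' with hS
  have hdisj' : ∀ i j, i ≠ j → Disjoint (B' i) (B' j) := fun i j h =>
    (hdisj i j h).mono (hsub i) (hsub j)
  have hcert : ∀ y, (∀ i ∈ S, y i = x i) → f y = f x := by
    intro y hy
    by_contra hfy
    set D := Finset.univ.filter (fun i => y i ≠ x i) with hD
    have hyD : flipOn x D = y := flipOn_diff x y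
    have hDne : D.Nonempty := by
      by_contra h
      rw [Finset.not_nonempty_iff_eq_empty] at h
      have : y = x := by
        funext i
        by_contra hne2
        have : i ∈ D := by simp [hD, hne2]
        simp [h] at this
      exact hfy (by rw [this])
    have hDdisj : ∀ i, Disjoint (B' i) D := by
      intro i
      rw [Finset.disjoint_right]
      intro a ha hb
      have haS : a ∈ S := Finset.mem_biUnion.mpr ⟨i, Finset.mem_univ i, hb⟩
      have := hy a haS
      simp [hD] at ha
      exact ha this
    have hmem : bsAt f x + 1 ∈ bsSet f x := by
      refine ⟨Fin.snoc B' D, ?_, ?_, ?_⟩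
      · intro i
        induction i using Fin.lastCases with
        | last => simpa using hDne
        | cast i =>
          simp only [Fin.snoc_castSucc]
          rcases Finset.eq_empty_or_nonempty (B' i) with h | h
          · exact absurd (by rw [h, flipOn_empty]) (hsens' i)
          · exact h
      · intro i j hij
        induction i using Fin.lastCases with
        | last =>
          induction j using Fin.lastCases with
          | last => exact absurd rfl hij
          | cast j => simpa using (hDdisj j).symm
        | cast i =>
          induction j using Fin.lastCases with
          | last => simpa using hDdisj i
          | cast j =>
            simp only [Fin.snoc_castSucc]
            exact hdisj' i j (fun h => hij (by rw [h]))
      · intro i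
        induction i using Fin.lastCases with
        | last => simpa [hyD] using hfy
        | cast i => simpa using hsens' i
    have := le_bsAt f x hmem
    omega
  have hcard : certAt f x ≤ S.card := Nat.sInf_le ⟨S, rfl, hcert⟩
  have hScard : S.card = ∑ i, (B' i).card := by
    rw [hS]
    exact Finset.card_biUnion (fun i _ j _ h => hdisj' i j h)
  have hsum : ∑ i, (B' i).card ≤ (bsAt f x) * blockSensitivity f := by
    calc ∑ i, (B' i).card
        ≤ ∑ _i : Fin (bsAt f x), blockSensitivity f :=
          Finset.sum_le_sum fun i _ => minimal_block_card_le f x (B' i) (hsens' i) (hmin i)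
      _ = (bsAt f x) * blockSensitivity f := by simp [Finset.sum_const, mul_comm]
  calc certAt f x ≤ S.card := hcard
    _ = ∑ i, (B' i).card := hScard
    _ ≤ (bsAt f x) * blockSensitivity f := hsum
    _ ≤ blockSensitivity f * blockSensitivity f :=
        Nat.mul_le_mul_right _ (bsAt_le_blockSensitivity f x)
    _ = (blockSensitivity f) ^ 2 := (sq _).symm

end NisanAux

/-- Nisan's inequality: `bs(f) ≤ C(f) ≤ bs(f)²`. -/
theorem stmt_7 {n : ℕ} (f : (Fin n → Bool) → Bool) :
    blockSensitivity f ≤ certComplexity f ∧ certComplexity f ≤ (blockSensitivity f) ^ 2 := by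
  constructor
  · exact ciSup_mono (Set.Finite.bddAbove (Set.finite_range _))
      (fun x => NisanAux.bsAt_le_certAt f x)
  · exact ciSup_le (fun x => NisanAux.certAt_le_sq f x)
end

section
/- For every total Boolean function f : {0,1}^n → {0,1} and every p ≥ 1, the deterministic p-parallel query complexity satisfies D^{p∥}(f) ≤ ⌈C^{(1)}(f)/p⌉ · bs(f). -/
/-- 1-certificate complexity: the max certificate complexity over 1-inputs. -/
noncomputable def oneCert {n : ℕ} (f : (Fin n → Bool) → Bool) : ℕ :=
  sSup {s | ∃ x, f x = true ∧ certAt f x = s}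

/-- `ComputesIn n p f T`: there is a deterministic algorithm computing `f` that in each
of `T` rounds adaptively queries at most `p` input bits in parallel. -/
inductive ComputesIn (n p : ℕ) : ((Fin n → Bool) → Bool) → ℕ → Prop
  | zero (f : (Fin n → Bool) → Bool) (b : Bool) (h : ∀ x, f x = b) : ComputesIn n p f 0
  | succ (f : (Fin n → Bool) → Bool) (T : ℕ) (Q : Finset (Fin n)) (hQ : Q.card ≤ p)
      (g : ((i : Fin n) → i ∈ Q → Bool) → (Fin n → Bool) → Bool)
      (hrec : ∀ a, ComputesIn n p (g a) T)
      (hval : ∀ x, f x = g (fun i _ => x i) x) : ComputesIn n p f (T + 1)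

/-- Deterministic `p`-parallel query complexity. -/
noncomputable def Dpar (n p : ℕ) (f : (Fin n → Bool) → Bool) : ℕ :=
  sInf {T | ComputesIn n p f T}

/-- Override `y` on `Q` by the values of `x`. -/
def ovr {n : ℕ} (Q : Finset (Fin n)) (x y : Fin n → Bool) : Fin n → Bool :=
  fun i => if i ∈ Q then x i else y i

lemma computes_succ {n p : ℕ} {f : (Fin n → Bool) → Bool} {T : ℕ}
    (h : ComputesIn n p f T) : ComputesIn n p f (T + 1) :=
  ComputesIn.succ f T ∅ (by simp) (fun _ => f) (fun _ => h) (fun _ => rfl)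

lemma computes_mono {n p : ℕ} {f : (Fin n → Bool) → Bool} {T T' : ℕ}
    (hle : T ≤ T') (h : ComputesIn n p f T) : ComputesIn n p f T' := by
  induction hle with
  | refl => exact h
  | step _ ih => exact computes_succ ih

/-- Querying a set of size ≤ r*p can be done in r rounds. -/
lemma query {n p : ℕ} :
    ∀ (r : ℕ) (Q : Finset (Fin n)) (h : (Fin n → Bool) → Bool) (T : ℕ),
    Q.card ≤ r * p →
    (∀ x : Fin n → Bool, ComputesIn n p (fun y => h (ovr Q x y)) T) →
    ComputesIn n p h (T + r) := by
  intro r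
  induction r with
  | zero =>
    intro Q h T hc hrec
    have hQ : Q = ∅ := Finset.card_eq_zero.mp (by simpa using hc)
    subst hQ
    have := hrec (fun _ => false)
    have heq0 : ∀ y : Fin n → Bool, ovr (∅ : Finset (Fin n)) (fun _ => false) y = y := by
      intro y; funext i; simp [ovr]
    have heq : (fun y => h (ovr (∅ : Finset (Fin n)) (fun _ => false) y)) = h := by
      funext y; rw [heq0]
    rwa [heq] at this
  | succ r ih =>
    intro Q h T hc hrec
    obtain ⟨Q₁, hsub, hcard⟩ := Finset.exists_subset_card_eq (s := Q) (n := min p Q.card) (min_le_right _ _)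
    have hQ1 : Q₁.card ≤ p := by rw [hcard]; exact min_le_left _ _
    have hQ2 : (Q \ Q₁).card ≤ r * p := by
      rw [Finset.card_sdiff_of_subset hsub, hcard]
      have : (r + 1) * p = r * p + p := by ring
      omega
    refine ComputesIn.succ h (T + r) Q₁ hQ1
      (fun a => fun y => h (ovr Q₁ (fun i => if hi : i ∈ Q₁ then a i hi else false) y))
      (fun a => ?_) (fun x => ?_)
    · apply ih (Q \ Q₁) _ T hQ2
      intro x
      set xa : Fin n → Bool := fun i => if hi : i ∈ Q₁ then a i hi else false with hxa
      have := hrec (fun i => if i ∈ Q₁ then xa i else x i)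
      have heq : (fun y => h (ovr Q (fun i => if i ∈ Q₁ then xa i else x i) y))
          = (fun y => h (ovr Q₁ xa (ovr (Q \ Q₁) x y))) := by
        funext y
        congr 1
        funext i
        by_cases h1 : i ∈ Q₁
        · simp [ovr, h1, hsub h1]
        · by_cases h2 : i ∈ Q
          · simp [ovr, h1, h2]
          · simp [ovr, h1, h2]
      rwa [heq] at this
    · show h x = h (ovr Q₁ _ x)
      congr 1
      funext i
      by_cases h1 : i ∈ Q₁ <;> simp [ovr, h1]

lemma ceil_le {C p : ℕ} (hp : 1 ≤ p) : C ≤ ((C + p - 1) / p) * p := by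
  rcases Nat.eq_zero_or_pos C with rfl | hC
  · simp
  have h1 : C + p - 1 = (C - 1) + p := by omega
  rw [h1, Nat.add_div_right _ (by omega : 0 < p)]
  have hd := Nat.div_add_mod (C - 1) p
  have hm := Nat.mod_lt (C - 1) (show 0 < p by omega)
  calc C = (C - 1) + 1 := by omega
    _ = p * ((C - 1) / p) + (C - 1) % p + 1 := by rw [hd]
    _ ≤ p * ((C - 1) / p) + p := by omega
    _ = ((C - 1) / p + 1) * p := by ring

lemma flip_agree {n : ℕ} (S : Finset (Fin n)) (y z : Fin n → Bool) :
    ∀ i ∈ S, flipOn y (S.filter (fun j => y j ≠ z j)) i = z i := by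
  intro i hi
  by_cases hyi : y i = z i
  · simp [flipOn, Finset.mem_filter, hyi]
  · simp only [flipOn, Finset.mem_filter]
    rw [if_pos ⟨hi, hyi⟩]
    cases hb : y i <;> cases hbz : z i <;> simp_all

set_option maxHeartbeats 1000000 in
/-- Main lemma: the Beals et al. algorithm. -/
lemma main_lemma {n p : ℕ} (hp : 1 ≤ p) (C : ℕ) :
    ∀ (k : ℕ) (h : (Fin n → Bool) → Bool),
    (∀ z, h z = true → ∃ S : Finset (Fin n), S.card ≤ C ∧
        ∀ w, (∀ i ∈ S, w i = z i) → h w = true) →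
    (∀ y, h y = false → ∀ B : Fin (k + 1) → Finset (Fin n),
        (∀ i, (B i).Nonempty) → (∀ i j, i ≠ j → Disjoint (B i) (B j)) →
        (∀ i, h (flipOn y (B i)) ≠ h y) → False) →
    ComputesIn n p h (((C + p - 1) / p) * k) := by
  intro k
  induction k with
  | zero =>
    intro h H1 H2
    by_cases hz : ∃ z, h z = true
    · obtain ⟨z, hztrue⟩ := hz
      obtain ⟨S, _, hScert⟩ := H1 z hztrue
      -- h is constantly true
      refine ComputesIn.zero h true (fun y => ?_)
      by_contra hy
      have hyf : h y = false := by cases hval : h y with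
        | false => rfl
        | true => exact absurd hval hy
      exfalso
      refine H2 y hyf (fun _ => S.filter (fun i => y i ≠ z i)) (fun _ => ?_)
        (fun i j hij => absurd (by omega : i = j) hij) (fun _ => ?_)
      · rw [Finset.filter_nonempty_iff]
        by_contra hne
        push_neg at hne
        have : h y = true := hScert y hne
        rw [this] at hyf; exact absurd hyf (by simp)
      · have hcert0 : h (flipOn y (S.filter (fun i => y i ≠ z i))) = true :=
          hScert _ (flip_agree S y z)
        rw [hcert0, hyf]; simp
    · push_neg at hz
      refine ComputesIn.zero h false (fun x => ?_)
      cases hval : h x with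
      | false => rfl
      | true => exact absurd hval (hz x)
  | succ k ih =>
    intro h H1 H2
    by_cases hz : ∃ z, h z = true
    · obtain ⟨z, hztrue⟩ := hz
      obtain ⟨S, hScard, hScert⟩ := H1 z hztrue
      have hCle : C ≤ ((C + p - 1) / p) * p := ceil_le hp
      rw [Nat.mul_succ]
      apply query ((C + p - 1) / p) S h _ (hScard.trans hCle)
      intro x
      apply ih (fun y => h (ovr S x y))
      · -- H1 for restricted function
        intro z' hz'
        obtain ⟨S₁, hS₁card, hS₁cert⟩ := H1 (ovr S x z') hz'
        refine ⟨S₁, hS₁card, fun w hw => ?_⟩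
        apply hS₁cert
        intro i hi
        by_cases hiS : i ∈ S
        · simp [ovr, hiS]
        · simp [ovr, hiS, hw i hi]
      · -- H2 for restricted function
        intro y' hy' B hBne hBdis hBsens
        have hy : h (ovr S x y') = false := hy'
        -- each B i is not contained in S
        have hnotsub : ∀ i, ¬ B i ⊆ S := by
          intro i hsub'
          apply hBsens i
          show h (ovr S x (flipOn y' (B i))) = h (ovr S x y')
          congr 1
          funext j
          by_cases hj : j ∈ S
          · simp [ovr, hj]
          · have : j ∉ B i := fun hjB => hj (hsub' hjB)
            simp [ovr, hj, flipOn, this]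
        refine H2 (ovr S x y') hy
          (Fin.snoc (fun i => B i \ S) (S.filter (fun j => ovr S x y' j ≠ z j)))
          (fun i => ?_) (fun i j => ?_) (fun i => ?_)
        · -- nonempty
          refine Fin.lastCases ?_ ?_ i
          · rw [Fin.snoc_last, Finset.filter_nonempty_iff]
            by_contra hne
            push_neg at hne
            have : h (ovr S x y') = true := hScert _ hne
            rw [this] at hy; exact absurd hy (by simp)
          · intro i'
            rw [Fin.snoc_castSucc]
            exact Finset.sdiff_nonempty.mpr (hnotsub i')
        · -- disjoint
          refine Fin.lastCases ?_ ?_ i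
          · refine Fin.lastCases ?_ ?_ j
            · intro hij; exact absurd rfl hij
            · intro j' _
              rw [Fin.snoc_last, Fin.snoc_castSucc]
              rw [Finset.disjoint_left]
              intro a ha hb
              exact (Finset.mem_sdiff.mp hb).2 (Finset.mem_filter.mp ha).1
          · intro i'
            refine Fin.lastCases ?_ ?_ j
            · intro _
              rw [Fin.snoc_last, Fin.snoc_castSucc]
              rw [Finset.disjoint_left]
              intro a ha hb
              exact (Finset.mem_sdiff.mp ha).2 (Finset.mem_filter.mp hb).1
            · intro j' hij
              rw [Fin.snoc_castSucc, Fin.snoc_castSucc]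
              have hne' : i' ≠ j' := fun he => hij (by rw [he])
              exact Finset.disjoint_of_subset_left (Finset.sdiff_subset)
                (Finset.disjoint_of_subset_right (Finset.sdiff_subset) (hBdis i' j' hne'))
        · -- sensitive
          refine Fin.lastCases ?_ ?_ i
          · rw [Fin.snoc_last]
            have hcert1 : h (flipOn (ovr S x y') (S.filter (fun j => ovr S x y' j ≠ z j))) = true :=
              hScert _ (flip_agree S (ovr S x y') z)
            rw [hcert1, hy]; simp
          · intro i'
            rw [Fin.snoc_castSucc]
            have key : flipOn (ovr S x y') (B i' \ S) = ovr S x (flipOn y' (B i')) := by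
              funext j
              by_cases hj : j ∈ S
              · have hnb : j ∉ B i' \ S := fun hc => (Finset.mem_sdiff.mp hc).2 hj
                simp [flipOn, hnb, ovr, hj]
              · by_cases hjB : j ∈ B i'
                · have hb : j ∈ B i' \ S := Finset.mem_sdiff.mpr ⟨hjB, hj⟩
                  simp [flipOn, hb, ovr, hj, hjB]
                · have hnb : j ∉ B i' \ S := fun hc => hjB (Finset.mem_sdiff.mp hc).1
                  simp [flipOn, hnb, ovr, hj, hjB]
            rw [key]
            exact hBsens i'
    · push_neg at hz
      refine computes_mono (Nat.zero_le _) (ComputesIn.zero h false (fun x => ?_))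
      cases hval : h x with
      | false => rfl
      | true => exact absurd hval (hz x)

lemma bsAt_bddAbove {n : ℕ} (f : (Fin n → Bool) → Bool) (x : Fin n → Bool) :
    ∀ k ∈ {k | ∃ B : Fin k → Finset (Fin n), (∀ i, (B i).Nonempty) ∧
      (∀ i j, i ≠ j → Disjoint (B i) (B j)) ∧ ∀ i, f (flipOn x (B i)) ≠ f x}, k ≤ n := by
  intro k hk
  obtain ⟨B, hne, hdis, _⟩ := hk
  have : Function.Injective (fun i : Fin k => (hne i).choose) := by
    intro i j hij
    by_contra hne'
    have hij' : (hne i).choose = (hne j).choose := hij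
    have h1 : (hne i).choose ∈ B i := (hne i).choose_spec
    have h2 : (hne j).choose ∈ B j := (hne j).choose_spec
    rw [← hij'] at h2
    exact Finset.disjoint_left.mp (hdis i j hne') h1 h2
  calc k = Fintype.card (Fin k) := (Fintype.card_fin k).symm
    _ ≤ Fintype.card (Fin n) := Fintype.card_le_of_injective _ this
    _ = n := Fintype.card_fin n

theorem stmt_8 {n : ℕ} (p : ℕ) (hp : 1 ≤ p) (f : (Fin n → Bool) → Bool) :
    Dpar n p f ≤ ((oneCert f + p - 1) / p) * blockSensitivity f := by
  apply Nat.sInf_le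
  show ComputesIn n p f _
  apply main_lemma hp (oneCert f) (blockSensitivity f) f
  · -- every 1-input has a certificate of size ≤ oneCert f
    intro z hz
    have hnonempty : {s | ∃ S : Finset (Fin n), S.card = s ∧
        ∀ y, (∀ i ∈ S, y i = z i) → f y = f z}.Nonempty := by
      refine ⟨n, Finset.univ, by simp, fun y hy => ?_⟩
      have : y = z := funext (fun i => hy i (Finset.mem_univ i))
      rw [this]
    obtain ⟨S, hScard, hScert⟩ := Nat.sInf_mem hnonempty
    have hle : certAt f z ≤ oneCert f := by
      apply le_csSup
      · refine ⟨n, fun s hs => ?_⟩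
        obtain ⟨w, _, rfl⟩ := hs
        apply Nat.sInf_le
        refine ⟨Finset.univ, by simp, fun y hy => ?_⟩
        have : y = w := funext (fun i => hy i (Finset.mem_univ i))
        rw [this]
      · exact ⟨z, hz, rfl⟩
    refine ⟨S, ?_, fun w hw => ?_⟩
    · rw [hScard]; exact hle
    · rw [hScert w hw, hz]
  · -- no (bs + 1) disjoint sensitive blocks at any input
    intro y _ B hBne hBdis hBsens
    have hmem : blockSensitivity f + 1 ∈ {k | ∃ B : Fin k → Finset (Fin n),
        (∀ i, (B i).Nonempty) ∧ (∀ i j, i ≠ j → Disjoint (B i) (B j)) ∧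
        ∀ i, f (flipOn y (B i)) ≠ f y} := ⟨B, hBne, hBdis, hBsens⟩
    have h1 : blockSensitivity f + 1 ≤ bsAt f y :=
      le_csSup ⟨n, bsAt_bddAbove f y⟩ hmem
    have h2 : bsAt f y ≤ blockSensitivity f := by
      apply le_ciSup_of_le _ y le_rfl
      refine ⟨n, ?_⟩
      rintro s ⟨w, rfl⟩
      exact csSup_le' (bsAt_bddAbove f w)
    omega
end

section
/- Let f : {0,1}^n → {0,1} be a total Boolean function, c > 1, and suppose p ≤ bs(f)^{1/c}. Assume the relations D^{p∥}(f) ≤ ⌈C^{(1)}(f)/p⌉·bs(f), C^{(1)}(f) ≤ bs(f)², and Q^{p∥}(f) ≥ α·√(bs(f)/p) for a universal constant α > 0. Then D^{p∥}(f) = O(Q^{p∥}(f)^{6+4/(c−1)}). -/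
/-- Given the stated relations between the complexity measures, the deterministic
`p`-parallel complexity is `O(Q^{6+4/(c-1)})`: there is a constant `K` (depending only
on `c` and `α`) bounding `D ≤ K · Q^{6+4/(c-1)}` for all functions/parameters. -/
theorem stmt_9 (c α : ℝ) (hc : 1 < c) (hα : 0 < α) :
    ∃ K : ℝ, 0 < K ∧
      ∀ (b C1 p D Q : ℕ),
        1 ≤ p →
        (p : ℝ) ≤ (b : ℝ) ^ (1 / c) →
        D ≤ ((C1 + p - 1) / p) * b →
        C1 ≤ b ^ 2 →
        α * Real.sqrt ((b : ℝ) / p) ≤ Q →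
        (D : ℝ) ≤ K * (Q : ℝ) ^ (6 + 4 / (c - 1)) := by
  have hc1 : (0:ℝ) < c - 1 := by linarith
  have hc0 : (0:ℝ) < c := by linarith
  set e : ℝ := 6 + 4 / (c - 1) with he
  have he0 : 0 < e := by
    have : 0 < 4 / (c-1) := by positivity
    simp [he]; linarith
  have hαe : (0:ℝ) < α ^ e := Real.rpow_pos_of_pos hα e
  refine ⟨2 / α ^ e, by positivity, ?_⟩
  intro b C1 p D Q hp hpb hD hC1 hQ
  have hp1 : (1:ℝ) ≤ (p:ℝ) := by exact_mod_cast hp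
  have hp0 : (0:ℝ) < (p:ℝ) := by linarith
  have hb1 : (1:ℝ) ≤ (b:ℝ) := by
    by_contra h
    push_neg at h
    have hb0 : b = 0 := by
      by_contra hb
      have : (1:ℝ) ≤ (b:ℝ) := by exact_mod_cast Nat.one_le_iff_ne_zero.mpr hb
      linarith
    rw [hb0] at hpb
    rw [Nat.cast_zero, Real.zero_rpow (by positivity)] at hpb
    linarith
  have hb0 : (0:ℝ) < (b:ℝ) := by linarith
  -- p ≤ b
  have hpb' : (p:ℝ) ≤ (b:ℝ) := by
    calc (p:ℝ) ≤ (b:ℝ)^(1/c) := hpb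
    _ ≤ (b:ℝ)^(1:ℝ) := Real.rpow_le_rpow_of_exponent_le hb1
        (by rw [div_le_one hc0]; linarith)
    _ = (b:ℝ) := Real.rpow_one _
  set x : ℝ := (b:ℝ) / (p:ℝ) with hx
  have hx1 : (1:ℝ) ≤ x := (one_le_div hp0).mpr hpb'
  have hx0 : (0:ℝ) < x := by linarith
  -- p^c ≤ b
  have hpc : (p:ℝ) ^ c ≤ (b:ℝ) := by
    calc (p:ℝ)^c ≤ ((b:ℝ)^(1/c))^c := Real.rpow_le_rpow (by positivity) hpb hc0.le
    _ = (b:ℝ)^((1/c)*c) := (Real.rpow_mul hb0.le _ _).symm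
    _ = (b:ℝ) := by rw [one_div_mul_cancel (ne_of_gt hc0), Real.rpow_one]
  -- p^(c-1) ≤ x
  have hpc1 : (p:ℝ) ^ (c-1) ≤ x := by
    rw [Real.rpow_sub hp0, Real.rpow_one, hx]
    gcongr
  -- p ≤ x^((c-1)⁻¹)
  have hpx : (p:ℝ) ≤ x ^ ((c-1)⁻¹) := by
    have h := Real.rpow_le_rpow (by positivity) hpc1 (inv_pos.mpr hc1).le
    rwa [← Real.rpow_mul (by positivity), mul_inv_cancel₀ (ne_of_gt hc1),
      Real.rpow_one] at h
  -- p^2 ≤ x^(2/(c-1))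
  have hp2 : (p:ℝ)^(2:ℕ) ≤ x ^ (2/(c-1)) := by
    calc (p:ℝ)^(2:ℕ) ≤ (x ^ ((c-1)⁻¹))^(2:ℕ) := pow_le_pow_left₀ (by positivity) hpx 2
    _ = x ^ (2/(c-1)) := by
        rw [← Real.rpow_natCast (x ^ ((c-1)⁻¹)) 2, ← Real.rpow_mul hx0.le]
        congr 1
        push_cast
        field_simp
  -- D ≤ 2 * b^3 / p
  have hb2p : (1:ℝ) ≤ (b:ℝ)^(2:ℕ)/(p:ℝ) := by
    rw [le_div_iff₀ hp0, one_mul]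
    nlinarith
  have hDb : (D:ℝ) ≤ 2 * (b:ℝ)^(3:ℕ) / (p:ℝ) := by
    have h0 : (D:ℝ) ≤ (((C1 + p - 1) / p : ℕ):ℝ) * (b:ℝ) := by
      have := (Nat.cast_le (α := ℝ)).mpr hD
      push_cast at this
      exact this
    have h1 : (((C1 + p - 1) / p : ℕ):ℝ) ≤ ((C1:ℝ)+(p:ℝ))/(p:ℝ) := by
      refine le_trans (Nat.cast_div_le) ?_
      gcongr
      calc ((C1 + p - 1 : ℕ):ℝ) ≤ ((C1 + p : ℕ):ℝ) := by
            exact_mod_cast Nat.sub_le _ _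
      _ = (C1:ℝ)+(p:ℝ) := by push_cast; ring
    have hC1' : (C1:ℝ) ≤ (b:ℝ)^(2:ℕ) := by exact_mod_cast hC1
    calc (D:ℝ) ≤ (((C1:ℝ)+(p:ℝ))/(p:ℝ)) * (b:ℝ) := by
          refine le_trans h0 ?_
          gcongr
    _ = ((C1:ℝ)/(p:ℝ) + 1) * (b:ℝ) := by field_simp
    _ ≤ ((b:ℝ)^(2:ℕ)/(p:ℝ) + (b:ℝ)^(2:ℕ)/(p:ℝ)) * (b:ℝ) := by
          have h2 : (C1:ℝ)/(p:ℝ) ≤ (b:ℝ)^(2:ℕ)/(p:ℝ) := by gcongr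
          have : (C1:ℝ)/(p:ℝ) + 1 ≤ (b:ℝ)^(2:ℕ)/(p:ℝ) + (b:ℝ)^(2:ℕ)/(p:ℝ) := by linarith
          exact mul_le_mul_of_nonneg_right this hb0.le
    _ = 2 * (b:ℝ)^(3:ℕ) / (p:ℝ) := by field_simp; ring
  -- 2 b^3/p = 2 x^3 p^2
  have hkey : 2 * (b:ℝ)^(3:ℕ) / (p:ℝ) = 2 * x^(3:ℕ) * (p:ℝ)^(2:ℕ) := by
    rw [hx]; field_simp
  -- x ≤ (Q/α)^2
  have hQ0 : (0:ℝ) ≤ (Q:ℝ) := Nat.cast_nonneg _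
  have hxQ : x ≤ ((Q:ℝ)/α)^(2:ℕ) := by
    have hs : Real.sqrt x ≤ (Q:ℝ)/α := by
      rw [le_div_iff₀ hα, mul_comm]; exact hQ
    calc x = (Real.sqrt x)^(2:ℕ) := (Real.sq_sqrt hx0.le).symm
    _ ≤ ((Q:ℝ)/α)^(2:ℕ) := pow_le_pow_left₀ (Real.sqrt_nonneg _) hs 2
  -- chain
  have hE0 : (0:ℝ) ≤ 3 + 2/(c-1) := by positivity
  have hchain : (D:ℝ) ≤ 2 * (((Q:ℝ)/α)^(2:ℕ)) ^ (3 + 2/(c-1)) := by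
    calc (D:ℝ) ≤ 2 * (b:ℝ)^(3:ℕ) / (p:ℝ) := hDb
    _ = 2 * x^(3:ℕ) * (p:ℝ)^(2:ℕ) := hkey
    _ ≤ 2 * x^(3:ℕ) * x ^ (2/(c-1)) := by gcongr
    _ = 2 * x ^ (3 + 2/(c-1)) := by
        rw [mul_assoc, ← Real.rpow_natCast x 3, ← Real.rpow_add hx0]
        norm_num
    _ ≤ 2 * (((Q:ℝ)/α)^(2:ℕ)) ^ (3 + 2/(c-1)) := by
        exact mul_le_mul_of_nonneg_left (Real.rpow_le_rpow hx0.le hxQ hE0) (by norm_num)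
  have hfin : (((Q:ℝ)/α)^(2:ℕ)) ^ (3 + 2/(c-1)) = ((Q:ℝ)/α) ^ e := by
    rw [← Real.rpow_natCast ((Q:ℝ)/α) 2, ← Real.rpow_mul (by positivity)]
    congr 1
    push_cast
    field_simp [he]
    rw [he]
    have hne : c - 1 ≠ 0 := hc1.ne'
    have h4 : (c-1) * (4/(c-1)) = 4 := by field_simp
    linear_combination -h4
  rw [hfin] at hchain
  have hqa : ((Q:ℝ)/α) ^ e = (Q:ℝ)^e / α^e := Real.div_rpow hQ0 hα.le e
  rw [hqa] at hchain
  calc (D:ℝ) ≤ 2 * ((Q:ℝ)^e / α^e) := hchain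
  _ = 2 / α^e * (Q:ℝ)^e := by ring
end

section
/- Define α_j = (1/(2n))·max((n/p)^{2/3} − j/p, 0) for integers j ≥ 0, with n, p positive integers, p ≤ n. Then for every s ≥ 0 and every J with 1 ≤ |J| ≤ p: (s·p + binom(p,2))·α_s² + n²·(α_s − α_{s+|J|})² ≤ 1. -/
/-- The dual learning-graph solution for element distinctness:
`α_j = (1/(2n)) · max((n/p)^{2/3} − j/p, 0)`. -/
noncomputable def alphaED (n p : ℕ) (j : ℕ) : ℝ :=
  (1 / (2 * (n : ℝ))) * max (((n : ℝ) / p) ^ ((2 : ℝ) / 3) - (j : ℝ) / p) 0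

/-- Feasibility of the dual solution for the `Ω((n/p)^{2/3})` parallel lower bound for
element distinctness; `t = |J|`. -/
theorem stmt_14 (n p : ℕ) (hn : 1 ≤ n) (hp : 1 ≤ p) (hpn : p ≤ n)
    (s t : ℕ) (ht1 : 1 ≤ t) (htp : t ≤ p) :
    ((s : ℝ) * p + (p.choose 2 : ℝ)) * (alphaED n p s) ^ 2 +
      (n : ℝ) ^ 2 * (alphaED n p s - alphaED n p (s + t)) ^ 2 ≤ 1 := by
  have hN : (1:ℝ) ≤ n := by exact_mod_cast hn
  have hP : (1:ℝ) ≤ p := by exact_mod_cast hp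
  have hPN : (p:ℝ) ≤ n := by exact_mod_cast hpn
  have hN0 : (0:ℝ) < n := by linarith
  have hP0 : (0:ℝ) < p := by linarith
  have hT1 : (1:ℝ) ≤ t := by exact_mod_cast ht1
  have hTP : (t:ℝ) ≤ p := by exact_mod_cast htp
  simp only [alphaED]
  push_cast
  set x : ℝ := (n:ℝ)/p with hxdef
  have hx1 : 1 ≤ x := (one_le_div hP0).2 hPN
  have hx0 : 0 < x := by linarith
  set M : ℝ := x ^ ((2:ℝ)/3) with hMdef
  have hM0 : 0 < M := Real.rpow_pos_of_pos hx0 _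
  have hMx : M ≤ x := by
    calc M ≤ x ^ (1:ℝ) := Real.rpow_le_rpow_of_exponent_le hx1 (by norm_num)
    _ = x := Real.rpow_one x
  have hM3 : M ^ 3 = x ^ 2 := by
    rw [hMdef, ← Real.rpow_natCast (x ^ ((2:ℝ)/3)) 3, ← Real.rpow_mul hx0.le,
      ← Real.rpow_natCast x 2]
    norm_num
  have hpx : (p:ℝ)^2 * x^2 = (n:ℝ)^2 := by
    rw [hxdef]; field_simp
  set a : ℝ := max (M - (s:ℝ)/p) 0 with hadef
  set b : ℝ := max (M - ((s:ℝ) + (t:ℝ))/p) 0 with hbdef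
  have ha0 : 0 ≤ a := le_max_right _ _
  have hb0 : 0 ≤ b := le_max_right _ _
  have haM : a ≤ M := by
    apply max_le _ hM0.le
    have : 0 ≤ (s:ℝ)/p := by positivity
    linarith
  have hba : b ≤ a := by
    apply max_le_max _ le_rfl
    have h : (s:ℝ)/p ≤ ((s:ℝ)+(t:ℝ))/p := by
      apply div_le_div_of_nonneg_right _ hP0.le
      linarith
    linarith
  have hab : a - b ≤ (t:ℝ)/p := by
    have h1 : a - b ≤ |a - b| := le_abs_self _
    have h2 : |a - b| ≤ |(M - (s:ℝ)/p) - (M - ((s:ℝ)+(t:ℝ))/p)| :=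
      abs_max_sub_max_le_abs _ _ _
    have h3 : (M - (s:ℝ)/p) - (M - ((s:ℝ)+(t:ℝ))/p) = (t:ℝ)/p := by
      field_simp
      ring
    rw [h3] at h2
    have h4 : |(t:ℝ)/p| = (t:ℝ)/p := abs_of_nonneg (by positivity)
    linarith [h1, h2, h4.le, h4.ge]
  have htp1 : (t:ℝ)/p ≤ 1 := by
    rw [div_le_one hP0]; exact hTP
  have hchoose : (p.choose 2 : ℝ) ≤ (p:ℝ)^2 := by
    have h1 : p.choose 2 ≤ p ^ 2 := by
      calc p.choose 2 = p * (p-1) / 2 := Nat.choose_two_right p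
        _ ≤ p * (p-1) := Nat.div_le_self _ _
        _ ≤ p * p := Nat.mul_le_mul_left _ (Nat.sub_le _ _)
        _ = p ^ 2 := (sq p).symm
    exact_mod_cast h1
  -- key bound 1 : s*p*a^2 ≤ n^2
  have key1 : (s:ℝ) * p * a^2 ≤ (n:ℝ)^2 := by
    rcases eq_or_lt_of_le ha0 with h | h
    · rw [← h]; ring_nf; positivity
    · have hu : 0 < M - (s:ℝ)/p := by
        by_contra h'
        push_neg at h'
        rw [hadef, max_eq_right h'] at h
        exact lt_irrefl 0 h
      have hsM : (s:ℝ) < M * p := (div_lt_iff₀ hP0).1 (by linarith)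
      have ha2 : a^2 ≤ M^2 := by nlinarith
      have : (s:ℝ) * ((p:ℝ) * a^2) ≤ (M * p) * ((p:ℝ) * M^2) := by
        apply mul_le_mul hsM.le (mul_le_mul_of_nonneg_left ha2 hP0.le)
          (by positivity) (by positivity)
      calc (s:ℝ) * p * a^2 = (s:ℝ) * ((p:ℝ) * a^2) := by ring
        _ ≤ (M * p) * ((p:ℝ) * M^2) := this
        _ = (p:ℝ)^2 * M^3 := by ring
        _ = (p:ℝ)^2 * x^2 := by rw [hM3]
        _ = (n:ℝ)^2 := hpx
  -- key bound 2 : choose * a^2 ≤ n^2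
  have key2 : (p.choose 2 : ℝ) * a^2 ≤ (n:ℝ)^2 := by
    have ha2 : a^2 ≤ x^2 := by nlinarith
    have hc0 : (0:ℝ) ≤ (p.choose 2 : ℝ) := by positivity
    calc (p.choose 2 : ℝ) * a^2 ≤ (p:ℝ)^2 * x^2 := by
          apply mul_le_mul hchoose ha2 (by positivity) (by positivity)
      _ = (n:ℝ)^2 := hpx
  -- key bound 3 : n^2 * (a-b)^2 ≤ n^2
  have key3 : (n:ℝ)^2 * (a - b)^2 ≤ (n:ℝ)^2 := by
    have h1 : 0 ≤ a - b := by linarith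
    have h2 : (a - b)^2 ≤ 1 := by
      rw [sq_le_one_iff_abs_le_one, abs_of_nonneg h1]
      linarith
    calc (n:ℝ)^2 * (a - b)^2 ≤ (n:ℝ)^2 * 1 :=
          mul_le_mul_of_nonneg_left h2 (by positivity)
      _ = (n:ℝ)^2 := mul_one _
  -- combine
  have hgoal : ((s:ℝ) * p + (p.choose 2 : ℝ)) * ((1 / (2 * (n:ℝ))) * a) ^ 2 +
      (n:ℝ) ^ 2 * ((1 / (2 * (n:ℝ))) * a - (1 / (2 * (n:ℝ))) * b) ^ 2
      = (((s:ℝ) * p + (p.choose 2 : ℝ)) * a^2 + (n:ℝ)^2 * (a - b)^2) / (4 * (n:ℝ)^2) := by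
    field_simp
    ring_nf
  rw [hgoal, div_le_one (by positivity)]
  have hexp : ((s:ℝ) * p + (p.choose 2 : ℝ)) * a^2
      = (s:ℝ) * p * a^2 + (p.choose 2 : ℝ) * a^2 := by ring
  rw [hexp]
  linarith [key1, key2, key3, sq_nonneg ((n:ℝ))]
end
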